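/- For all integers f,g,s,t≥1 there exist integers n1,n2≥1 with the following property: if G is a (K_{s,s},K_t)-free graph, z1,z2∈V(G) are adjacent, and there exists a (z1,z2,n1,n2)-crystal in G, then there exists a clear (z1,z2,f,g)-crystal in G. -/

import Mathlib

/-- `G` is `H`-free: no induced subgraph of `G` is isomorphic to `H`. -/
def Free {V W : Type} (G : SimpleGraph V) (H : SimpleGraph W) : Prop :=
  IsEmpty (H ↪g G)

/-- A graph is chordal if it has no induced cycle on at least four vertices. -/
def Chordal {V : Type} (G : SimpleGraph V) : Prop :=
  ∀ n : ℕ, 4 ≤ n → IsEmpty (SimpleGraph.cycleGraph n ↪g G)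

/-- A graph is even-hole-free if it has no induced cycle on an even number (at least four)
of vertices. -/
def EvenHoleFree {V : Type} (G : SimpleGraph V) : Prop :=
  ∀ n : ℕ, 4 ≤ n → Even n → IsEmpty (SimpleGraph.cycleGraph n ↪g G)

/-- `cone F` is obtained from `F` by adding a universal vertex (the vertex `none`). -/
def cone {V : Type} (F : SimpleGraph V) : SimpleGraph (Option V) :=
  SimpleGraph.fromRel (fun u v => u = none ∨ ∃ a b, u = some a ∧ v = some b ∧ F.Adj a b)
/-- `(S, S1, S2)` is a `(z1, z2, f, g)`-crystal in `G`. -/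
structure IsCrystalIn {V : Type} (G : SimpleGraph V) (z1 z2 : V) (f g : ℕ)
    (S : Finset V) (S1 S2 : V → Finset V) : Prop where
  adj : G.Adj z1 z2
  cardS : S.card = f
  z1_not_mem : z1 ∉ S
  z2_not_mem : z2 ∉ S
  card1 : ∀ z ∈ S, (S1 z).card = g
  card2 : ∀ z ∈ S, (S2 z).card = g
  avoid1 : ∀ z ∈ S, ∀ x ∈ S1 z, x ∉ S ∧ x ≠ z1 ∧ x ≠ z2
  avoid2 : ∀ z ∈ S, ∀ x ∈ S2 z, x ∉ S ∧ x ≠ z1 ∧ x ≠ z2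
  disj11 : ∀ z ∈ S, ∀ z' ∈ S, z ≠ z' → Disjoint (S1 z) (S1 z')
  disj22 : ∀ z ∈ S, ∀ z' ∈ S, z ≠ z' → Disjoint (S2 z) (S2 z')
  disj12 : ∀ z ∈ S, ∀ z' ∈ S, Disjoint (S1 z) (S2 z')
  adj1 : ∀ z ∈ S, ∀ x ∈ S1 z, G.Adj x z1 ∧ G.Adj x z ∧ ¬ G.Adj x z2
  adj2 : ∀ z ∈ S, ∀ x ∈ S2 z, G.Adj x z2 ∧ G.Adj x z ∧ ¬ G.Adj x z1

/-- The vertex set `V(c)` of a crystal `(S, S1, S2)`. -/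
def crystalVerts {V : Type} (S : Finset V) (S1 S2 : V → Finset V) : Set V :=
  ↑S ∪ (⋃ z ∈ S, (↑(S1 z) : Set V)) ∪ (⋃ z ∈ S, (↑(S2 z) : Set V))

/-- Two finsets are anticomplete in `G`. -/
def Anticomp {V : Type} (G : SimpleGraph V) (A B : Finset V) : Prop :=
  ∀ u ∈ A, ∀ v ∈ B, ¬ G.Adj u v

/-- The crystal `(S, S1, S2)` is clear: `S` is a stable set and the `2f` sets
`S1 z, S2 z (z ∈ S)` are pairwise anticomplete stable sets. -/
def ClearCrystal {V : Type} (G : SimpleGraph V)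
    (S : Finset V) (S1 S2 : V → Finset V) : Prop :=
  (∀ u ∈ S, ∀ v ∈ S, ¬ G.Adj u v) ∧
  (∀ z ∈ S, (∀ u ∈ S1 z, ∀ v ∈ S1 z, ¬ G.Adj u v) ∧ (∀ u ∈ S2 z, ∀ v ∈ S2 z, ¬ G.Adj u v)) ∧
  (∀ z ∈ S, ∀ z' ∈ S, z ≠ z' → Anticomp G (S1 z) (S1 z') ∧ Anticomp G (S2 z) (S2 z')) ∧
  (∀ z ∈ S, ∀ z' ∈ S, Anticomp G (S1 z) (S2 z'))


open Finset

variable {V : Type} (G : SimpleGraph V)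

/-- Ramsey: a set of size `2^p` contains a clique `C` and a stable set `D`
with `|C| + |D| = p`. -/
lemma myRam : ∀ (p : ℕ) (B : Finset V), 2 ^ p ≤ B.card →
    ∃ C D : Finset V, C ⊆ B ∧ D ⊆ B ∧ Disjoint C D ∧ C.card + D.card = p ∧
      (∀ u ∈ C, ∀ v ∈ C, u ≠ v → G.Adj u v) ∧ (∀ u ∈ D, ∀ v ∈ D, ¬ G.Adj u v) := by
  classical
  intro p
  induction p with
  | zero =>
    intro B _
    exact ⟨∅, ∅, empty_subset _, empty_subset _, disjoint_empty_left _, by simp,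
      by simp, by simp⟩
  | succ p ih =>
    intro B hB
    have hBpos : 0 < B.card := lt_of_lt_of_le (by positivity) hB
    obtain ⟨a, ha⟩ := Finset.card_pos.mp hBpos
    set N := (B.erase a).filter (fun x => G.Adj a x) with hNdef
    set M := (B.erase a).filter (fun x => ¬ G.Adj a x) with hMdef
    have hNM : N.card + M.card = (B.erase a).card :=
      card_filter_add_card_filter_not (fun x => G.Adj a x)
    have hce : (B.erase a).card = B.card - 1 := card_erase_of_mem ha
    have hpow : 2 ^ (p + 1) = 2 ^ p + 2 ^ p := by ring
    have hcases : 2 ^ p ≤ N.card ∨ 2 ^ p ≤ M.card := by omega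
    rcases hcases with hc | hc
    · obtain ⟨C, D, hCN, hDN, hdisj, hcard, hclique, hstable⟩ := ih N hc
      have hNB : N ⊆ B := (filter_subset _ _).trans (erase_subset _ _)
      have haC : a ∉ C := fun h => (notMem_erase a B) ((filter_subset _ _) (hCN h))
      refine ⟨insert a C, D, insert_subset ha (hCN.trans hNB), hDN.trans hNB, ?_, ?_, ?_, hstable⟩
      · rw [disjoint_insert_left]
        exact ⟨fun h => (notMem_erase a B) ((filter_subset _ _) (hDN h)), hdisj⟩
      · rw [card_insert_of_notMem haC]; omega
      · intro u hu v hv huv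
        rcases mem_insert.mp hu with rfl | hu2
        · rcases mem_insert.mp hv with rfl | hv2
          · exact absurd rfl huv
          · exact (mem_filter.mp (hCN hv2)).2
        · rcases mem_insert.mp hv with rfl | hv2
          · exact ((mem_filter.mp (hCN hu2)).2).symm
          · exact hclique u hu2 v hv2 huv
    · obtain ⟨C, D, hCN, hDN, hdisj, hcard, hclique, hstable⟩ := ih M hc
      have hNB : M ⊆ B := (filter_subset _ _).trans (erase_subset _ _)
      have haD : a ∉ D := fun h => (notMem_erase a B) ((filter_subset _ _) (hDN h))
      refine ⟨C, insert a D, hCN.trans hNB, insert_subset ha (hDN.trans hNB), ?_, ?_, hclique, ?_⟩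
      · rw [disjoint_insert_right]
        exact ⟨fun h => (notMem_erase a B) ((filter_subset _ _) (hCN h)), hdisj⟩
      · rw [card_insert_of_notMem haD]; omega
      · intro u hu v hv
        rcases mem_insert.mp hu with rfl | hu2
        · rcases mem_insert.mp hv with rfl | hv2
          · exact G.irrefl
          · exact (mem_filter.mp (hDN hv2)).2
        · rcases mem_insert.mp hv with rfl | hv2
          · exact fun h => (mem_filter.mp (hDN hu2)).2 h.symm
          · exact hstable u hu2 v hv2

/-- Bipartite Ramsey halving lemma. -/
lemma myBram (n : ℕ) : ∀ (p : ℕ) (A B : Finset V), p ≤ A.card → n * 2 ^ p ≤ B.card →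
    ∃ C D B' : Finset V, C ⊆ A ∧ D ⊆ A ∧ B' ⊆ B ∧ Disjoint C D ∧
      C.card + D.card = p ∧ n ≤ B'.card ∧
      (∀ u ∈ C, ∀ v ∈ B', G.Adj u v) ∧ (∀ u ∈ D, ∀ v ∈ B', ¬ G.Adj u v) := by
  classical
  intro p
  induction p with
  | zero =>
    intro A B _ hB
    exact ⟨∅, ∅, B, empty_subset _, empty_subset _, subset_rfl, disjoint_empty_left _,
      by simp, by simpa using hB, by simp, by simp⟩
  | succ p ih =>
    intro A B hA hB
    have hApos : 0 < A.card := by omega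
    obtain ⟨a, ha⟩ := Finset.card_pos.mp hApos
    set N := B.filter (fun x => G.Adj a x) with hNdef
    set M := B.filter (fun x => ¬ G.Adj a x) with hMdef
    have hNM : N.card + M.card = B.card :=
      card_filter_add_card_filter_not (fun x => G.Adj a x)
    have hAe : (A.erase a).card = A.card - 1 := card_erase_of_mem ha
    have hpow : n * 2 ^ (p + 1) = n * 2 ^ p + n * 2 ^ p := by ring
    have hcases : n * 2 ^ p ≤ N.card ∨ n * 2 ^ p ≤ M.card := by omega
    rcases hcases with hc | hc
    · obtain ⟨C, D, B', hC, hD, hB', hdisj, hcard, hn, hcomp, hanti⟩ :=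
        ih (A.erase a) N (by omega) hc
      have haC : a ∉ C := fun h => (notMem_erase a A) (hC h)
      refine ⟨insert a C, D, B', insert_subset ha (hC.trans (erase_subset _ _)),
        hD.trans (erase_subset _ _), hB'.trans (filter_subset _ _), ?_, ?_, hn, ?_, hanti⟩
      · rw [disjoint_insert_left]
        exact ⟨fun h => (notMem_erase a A) (hD h), hdisj⟩
      · rw [card_insert_of_notMem haC]; omega
      · intro u hu v hv
        rcases mem_insert.mp hu with rfl | hu2
        · exact (mem_filter.mp (hB' hv)).2
        · exact hcomp u hu2 v hv
    · obtain ⟨C, D, B', hC, hD, hB', hdisj, hcard, hn, hcomp, hanti⟩ :=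
        ih (A.erase a) M (by omega) hc
      have haD : a ∉ D := fun h => (notMem_erase a A) (hD h)
      refine ⟨C, insert a D, B', hC.trans (erase_subset _ _),
        insert_subset ha (hD.trans (erase_subset _ _)), hB'.trans (filter_subset _ _), ?_, ?_,
        hn, hcomp, ?_⟩
      · rw [disjoint_insert_right]
        exact ⟨fun h => (notMem_erase a A) (hC h), hdisj⟩
      · rw [card_insert_of_notMem haD]; omega
      · intro u hu v hv
        rcases mem_insert.mp hu with rfl | hu2
        · exact (mem_filter.mp (hB' hv)).2
        · exact hanti u hu2 v hv


lemma exists_inj_fun (n : ℕ) (A : Finset V) (h : A.card = n) :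
    ∃ a : Fin n → V, Function.Injective a ∧ ∀ i, a i ∈ A := by
  refine ⟨fun i => (A.equivFin.symm (Fin.cast h.symm i) : V), ?_, ?_⟩
  · intro i j hij
    have := A.equivFin.symm.injective (Subtype.val_injective hij)
    simpa [Fin.ext_iff] using congrArg Fin.val this
  · intro i; exact (A.equivFin.symm (Fin.cast h.symm i)).2

lemma noKt {t : ℕ} (hfree : Free G (⊤ : SimpleGraph (Fin t))) (C : Finset V)
    (hC : ∀ u ∈ C, ∀ v ∈ C, u ≠ v → G.Adj u v) : C.card < t := by
  by_contra h
  push_neg at h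
  obtain ⟨C', hsub, hcard⟩ := exists_subset_card_eq h
  obtain ⟨a, hainj, hamem⟩ := exists_inj_fun t C' hcard
  refine hfree.false ⟨⟨a, hainj⟩, ?_⟩
  intro i j
  simp only [Function.Embedding.coeFn_mk, SimpleGraph.top_adj]
  constructor
  · intro hadj hij; rw [hij] at hadj; exact G.irrefl hadj
  · intro hij; exact hC _ (hsub (hamem i)) _ (hsub (hamem j)) (fun h' => hij (hainj h'))

lemma noKss {s : ℕ} (hfree : Free G (completeBipartiteGraph (Fin s) (Fin s)))
    (A B : Finset V)
    (hA : ∀ u ∈ A, ∀ v ∈ A, ¬ G.Adj u v) (hB : ∀ u ∈ B, ∀ v ∈ B, ¬ G.Adj u v)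
    (hdisj : Disjoint A B) (hcomp : ∀ u ∈ A, ∀ v ∈ B, G.Adj u v) :
    A.card < s ∨ B.card < s := by
  by_contra h
  push_neg at h
  obtain ⟨hAc, hBc⟩ := h
  obtain ⟨A', hAsub, hAcard⟩ := exists_subset_card_eq hAc
  obtain ⟨B', hBsub, hBcard⟩ := exists_subset_card_eq hBc
  obtain ⟨a, hainj, hamem⟩ := exists_inj_fun s A' hAcard
  obtain ⟨b, hbinj, hbmem⟩ := exists_inj_fun s B' hBcard
  have haA : ∀ i, a i ∈ A := fun i => hAsub (hamem i)
  have hbB : ∀ i, b i ∈ B := fun i => hBsub (hbmem i)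
  have hinj : Function.Injective (Sum.elim a b) := by
    intro u v huv
    cases u with
    | inl i => cases v with
      | inl j => exact congrArg Sum.inl (hainj huv)
      | inr j =>
        have huv' : a i = b j := huv
        exact absurd (huv' ▸ haA i) (Finset.disjoint_right.mp hdisj (hbB j))
    | inr i => cases v with
      | inl j =>
        have huv' : b i = a j := huv
        exact absurd (huv' ▸ hbB i) (Finset.disjoint_left.mp hdisj (haA j))
      | inr j => exact congrArg Sum.inr (hbinj huv)
  refine hfree.false ⟨⟨Sum.elim a b, hinj⟩, ?_⟩
  intro u v
  cases u with
  | inl i => cases v with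
    | inl j =>
      simp only [Function.Embedding.coeFn_mk, Sum.elim_inl, completeBipartiteGraph_adj]
      simp [hA _ (haA i) _ (haA j)]
    | inr j =>
      simp only [Function.Embedding.coeFn_mk, Sum.elim_inl, Sum.elim_inr,
        completeBipartiteGraph_adj]
      simp [hcomp _ (haA i) _ (hbB j)]
  | inr i => cases v with
    | inl j =>
      simp only [Function.Embedding.coeFn_mk, Sum.elim_inl, Sum.elim_inr,
        completeBipartiteGraph_adj]
      simp [(G.adj_comm _ _).mpr, hcomp _ (haA j) _ (hbB i)]
    | inr j =>
      simp only [Function.Embedding.coeFn_mk, Sum.elim_inr, completeBipartiteGraph_adj]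
      simp [hB _ (hbB i) _ (hbB j)]



/-- The blow-up function for one bipartite-Ramsey cleaning step. -/
def Fstep (s τ : ℕ) : ℕ := (max s τ) * 2 ^ (s + τ)

/-- Iterated blow-up. -/
def mIt (s g k : ℕ) : ℕ := (Fstep s)^[k] g

lemma le_Fstep (s τ : ℕ) (hs : 1 ≤ s) : τ ≤ Fstep s τ :=
  calc τ ≤ max s τ * 1 := by simp
  _ ≤ max s τ * 2 ^ (s + τ) := Nat.mul_le_mul_left _ (Nat.one_le_two_pow)

lemma add_le_Fstep (s τ : ℕ) (hs : 1 ≤ s) : s + τ ≤ Fstep s τ :=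
  calc s + τ ≤ 2 ^ (s + τ) := Nat.le_of_lt Nat.lt_two_pow_self
  _ = 1 * 2 ^ (s + τ) := (one_mul _).symm
  _ ≤ max s τ * 2 ^ (s + τ) := Nat.mul_le_mul_right _ (le_trans hs (le_max_left _ _))

lemma mIt_zero (s g : ℕ) : mIt s g 0 = g := rfl

lemma mIt_succ (s g k : ℕ) : mIt s g (k + 1) = Fstep s (mIt s g k) := by
  simp [mIt, Function.iterate_succ_apply']

lemma mIt_mono (s g : ℕ) (hs : 1 ≤ s) : Monotone (mIt s g) := by
  apply monotone_nat_of_le_succ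
  intro k
  rw [mIt_succ]
  exact le_Fstep s _ hs

lemma g_le_mIt (s g k : ℕ) (hs : 1 ≤ s) : g ≤ mIt s g k := by
  have := mIt_mono s g hs (Nat.zero_le k)
  simpa [mIt_zero] using this

variable {V : Type} (G : SimpleGraph V)

/-- One cleaning step: two large disjoint stable sets in a `K_{s,s}`-free graph contain
large anticomplete subsets. -/
lemma pairClean {s : ℕ} (hs : 1 ≤ s)
    (hfree : Free G (completeBipartiteGraph (Fin s) (Fin s)))
    (τ : ℕ) (A B : Finset V)
    (hA : ∀ u ∈ A, ∀ v ∈ A, ¬ G.Adj u v) (hB : ∀ u ∈ B, ∀ v ∈ B, ¬ G.Adj u v)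
    (hdisj : Disjoint A B) (hAc : Fstep s τ ≤ A.card) (hBc : Fstep s τ ≤ B.card) :
    ∃ A' B' : Finset V, A' ⊆ A ∧ B' ⊆ B ∧ τ ≤ A'.card ∧ τ ≤ B'.card ∧
      Anticomp G A' B' := by
  obtain ⟨C, D, B', hC, hD, hB', hCD, hcard, hn, hcomp, hanti⟩ :=
    myBram G (max s τ) (s + τ) A B (le_trans (add_le_Fstep s τ hs) hAc)
      (le_trans (le_of_eq rfl) hBc)
  have hCs : C.card < s := by
    rcases noKss G hfree C B' (fun u hu v hv => hA u (hC hu) v (hC hv))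
      (fun u hu v hv => hB u (hB' hu) v (hB' hv))
      (Finset.disjoint_of_subset_left hC (Finset.disjoint_of_subset_right hB' hdisj))
      hcomp with h | h
    · exact h
    · exact absurd (le_trans (le_max_left s τ) hn) (not_le.mpr h)
  refine ⟨D, B', hD, hB', by omega, le_trans (le_max_right s τ) hn, hanti⟩

/-- Cleaning a list of pairs of sets. -/
lemma cleanPairs {s : ℕ} (hs : 1 ≤ s)
    (hfree : Free G (completeBipartiteGraph (Fin s) (Fin s))) {ι : Type} (g : ℕ) :
    ∀ (P : List (ι × ι)) (T : ι → Finset V),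
    (∀ q ∈ P, (∀ u ∈ T q.1, ∀ v ∈ T q.1, ¬ G.Adj u v) ∧
      (∀ u ∈ T q.2, ∀ v ∈ T q.2, ¬ G.Adj u v) ∧
      Disjoint (T q.1) (T q.2) ∧ q.1 ≠ q.2 ∧
      mIt s g P.length ≤ (T q.1).card ∧ mIt s g P.length ≤ (T q.2).card) →
    ∃ T' : ι → Finset V, (∀ i, T' i ⊆ T i) ∧
      (∀ i, min g (T i).card ≤ (T' i).card) ∧
      (∀ q ∈ P, Anticomp G (T' q.1) (T' q.2)) := by
  classical
  intro P
  induction P with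
  | nil =>
    intro T _
    exact ⟨T, fun i => subset_rfl, fun i => min_le_right _ _, by simp⟩
  | cons q0 P' ih =>
    intro T hhyp
    obtain ⟨hst1, hst2, hdisj, hne, hc1, hc2⟩ := hhyp q0 List.mem_cons_self
    have hlen : (q0 :: P').length = P'.length + 1 := rfl
    have hF : mIt s g (q0 :: P').length = Fstep s (mIt s g P'.length) := by
      rw [hlen, mIt_succ]
    rw [hF] at hc1 hc2
    obtain ⟨A', B', hA'sub, hB'sub, hA'c, hB'c, hanti⟩ :=
      pairClean G hs hfree (mIt s g P'.length) (T q0.1) (T q0.2) hst1 hst2 hdisj hc1 hc2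
    set T₁ : ι → Finset V := Function.update (Function.update T q0.1 A') q0.2 B' with hT₁def
    have hT₁j : T₁ q0.2 = B' := Function.update_self _ _ _
    have hT₁i : T₁ q0.1 = A' := by
      rw [hT₁def, Function.update_of_ne hne, Function.update_self]
    have hT₁sub : ∀ k, T₁ k ⊆ T k := by
      intro k
      by_cases hk : k = q0.2
      · subst hk; rw [hT₁j]; exact hB'sub
      · by_cases hk' : k = q0.1
        · subst hk'; rw [hT₁i]; exact hA'sub
        · rw [hT₁def, Function.update_of_ne hk, Function.update_of_ne hk']
    have hT₁card : ∀ k, mIt s g P'.length ≤ (T k).card → mIt s g P'.length ≤ (T₁ k).card := by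
      intro k hkc
      by_cases hk : k = q0.2
      · subst hk; rw [hT₁j]; exact hB'c
      · by_cases hk' : k = q0.1
        · subst hk'; rw [hT₁i]; exact hA'c
        · rw [hT₁def, Function.update_of_ne hk, Function.update_of_ne hk']; exact hkc
    obtain ⟨T'', hsub'', hmin'', hanti''⟩ := ih T₁ (by
      intro q hq
      obtain ⟨h1, h2, h3, h4, h5, h6⟩ := hhyp q (List.mem_cons_of_mem _ hq)
      have hmono : mIt s g P'.length ≤ mIt s g (q0 :: P').length :=
        mIt_mono s g hs (by rw [hlen]; omega)
      refine ⟨fun u hu v hv => h1 u (hT₁sub _ hu) v (hT₁sub _ hv),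
        fun u hu v hv => h2 u (hT₁sub _ hu) v (hT₁sub _ hv),
        Finset.disjoint_of_subset_left (hT₁sub _) (Finset.disjoint_of_subset_right (hT₁sub _) h3),
        h4, hT₁card _ (le_trans hmono h5), hT₁card _ (le_trans hmono h6)⟩)
    refine ⟨T'', fun i => (hsub'' i).trans (hT₁sub i), ?_, ?_⟩
    · intro i
      refine le_trans ?_ (hmin'' i)
      by_cases hk : i = q0.2
      · subst hk
        rw [hT₁j]
        exact le_trans (min_le_left _ _)
          (le_min le_rfl (le_trans (g_le_mIt s g _ hs) hB'c))
      · by_cases hk' : i = q0.1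
        · subst hk'
          rw [hT₁i]
          exact le_trans (min_le_left _ _)
            (le_min le_rfl (le_trans (g_le_mIt s g _ hs) hA'c))
        · rw [hT₁def, Function.update_of_ne hk, Function.update_of_ne hk']
    · intro q hq
      rcases List.mem_cons.mp hq with rfl | hq'
      · have h1 : T'' q.1 ⊆ A' := by rw [← hT₁i]; exact hsub'' _
        have h2 : T'' q.2 ⊆ B' := by rw [← hT₁j]; exact hsub'' _
        exact fun u hu v hv => hanti u (h1 hu) v (h2 hv)
      · exact hanti'' q hq'

/-- For all `f, g, s, t ≥ 1` there are `n1, n2 ≥ 1` such that in any `(K_{s,s}, K_t)`-free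
graph, the presence of a `(z1, z2, n1, n2)`-crystal yields a clear `(z1, z2, f, g)`-crystal. -/
theorem stmt2 (f g s t : ℕ) (hf : 1 ≤ f) (hg : 1 ≤ g) (hs : 1 ≤ s) (ht : 1 ≤ t) :
    ∃ n1 n2 : ℕ, 1 ≤ n1 ∧ 1 ≤ n2 ∧ ∀ {V : Type} (G : SimpleGraph V),
      Free G (completeBipartiteGraph (Fin s) (Fin s)) →
      Free G (⊤ : SimpleGraph (Fin t)) →
      ∀ z1 z2 : V, G.Adj z1 z2 →
      (∃ Λ Λ1 Λ2, IsCrystalIn G z1 z2 n1 n2 Λ Λ1 Λ2) →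
      ∃ S S1 S2, IsCrystalIn G z1 z2 f g S S1 S2 ∧ ClearCrystal G S S1 S2 := by
  classical
  set K := (f * 2) * (f * 2) with hK
  set M := mIt s g K with hM
  refine ⟨2 ^ (t + f), 2 ^ (t + M), Nat.one_le_two_pow, Nat.one_le_two_pow, ?_⟩
  intro V G hss hts z1 z2 hz hex
  obtain ⟨Λ, Λ1, Λ2, hc⟩ := hex
  -- Step 1: a stable set S₀ of size f inside Λ
  obtain ⟨C, D, hCΛ, hDΛ, hCD, hcard, hclique, hstable⟩ :=
    myRam G (t + f) Λ (le_of_eq hc.cardS.symm)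
  have hCt : C.card < t := noKt G hts C hclique
  obtain ⟨S₀, hS₀D, hS₀card⟩ := Finset.exists_subset_card_eq (show f ≤ D.card by omega)
  have hS₀Λ : S₀ ⊆ Λ := hS₀D.trans hDΛ
  have hS₀stable : ∀ u ∈ S₀, ∀ v ∈ S₀, ¬ G.Adj u v :=
    fun u hu v hv => hstable u (hS₀D hu) v (hS₀D hv)
  -- Step 2: stable subsets of size M inside each Λ1 z, Λ2 z
  have hch1 : ∀ z : V, ∃ Tz : Finset V, z ∈ S₀ →
      Tz ⊆ Λ1 z ∧ M ≤ Tz.card ∧ (∀ u ∈ Tz, ∀ v ∈ Tz, ¬ G.Adj u v) := by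
    intro z
    by_cases hzS : z ∈ S₀
    · obtain ⟨C', D', hC', hD', _, hcard', hclique', hstable'⟩ :=
        myRam G (t + M) (Λ1 z) (le_of_eq (hc.card1 z (hS₀Λ hzS)).symm)
      have := noKt G hts C' hclique'
      exact ⟨D', fun _ => ⟨hD', by omega, hstable'⟩⟩
    · exact ⟨∅, fun h => absurd h hzS⟩
  have hch2' : ∀ z : V, ∃ Tz : Finset V, z ∈ S₀ →
      Tz ⊆ Λ2 z ∧ M ≤ Tz.card ∧ (∀ u ∈ Tz, ∀ v ∈ Tz, ¬ G.Adj u v) := by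
    intro z
    by_cases hzS : z ∈ S₀
    · obtain ⟨C', D', hC', hD', _, hcard', hclique', hstable'⟩ :=
        myRam G (t + M) (Λ2 z) (le_of_eq (hc.card2 z (hS₀Λ hzS)).symm)
      have := noKt G hts C' hclique'
      exact ⟨D', fun _ => ⟨hD', by omega, hstable'⟩⟩
    · exact ⟨∅, fun h => absurd h hzS⟩
  choose T1 hT1 using hch1
  choose T2 hT2 using hch2'
  -- Step 3: clean all pairs to be anticomplete
  set E := S₀ ×ˢ (Finset.univ : Finset Bool) with hE
  set P := ((E ×ˢ E).filter (fun q => q.1 ≠ q.2)).toList with hP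
  set T : V × Bool → Finset V := fun i => if i.2 = true then T2 i.1 else T1 i.1 with hT
  have hTf : ∀ z : V, T (z, false) = T1 z := fun z => by simp [hT]
  have hTt : ∀ z : V, T (z, true) = T2 z := fun z => by simp [hT]
  have hTfacts : ∀ i : V × Bool, i.1 ∈ S₀ →
      M ≤ (T i).card ∧ (∀ u ∈ T i, ∀ v ∈ T i, ¬ G.Adj u v) := by
    rintro ⟨z, b⟩ hi
    cases b
    · rw [hTf]; exact ⟨(hT1 z hi).2.1, (hT1 z hi).2.2⟩
    · rw [hTt]; exact ⟨(hT2 z hi).2.1, (hT2 z hi).2.2⟩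
  have hPlen : P.length ≤ K := by
    rw [hP, Finset.length_toList]
    calc ((E ×ˢ E).filter (fun q => q.1 ≠ q.2)).card ≤ (E ×ˢ E).card :=
          Finset.card_filter_le _ _
      _ = E.card * E.card := Finset.card_product _ _
      _ = K := by
          rw [hE, Finset.card_product, hS₀card, Finset.card_univ, Fintype.card_bool, hK]
  have hdisjT : ∀ (z : V), z ∈ S₀ → ∀ (z' : V), z' ∈ S₀ → ∀ b b' : Bool,
      ((z, b) : V × Bool) ≠ (z', b') → Disjoint (T (z, b)) (T (z', b')) := by
    intro z hzS z' hz'S b b' hne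
    cases b <;> cases b'
    · have hzz' : z ≠ z' := fun h => hne (by rw [h])
      rw [hTf, hTf]
      exact Finset.disjoint_of_subset_left (hT1 z hzS).1
        (Finset.disjoint_of_subset_right (hT1 z' hz'S).1
          (hc.disj11 z (hS₀Λ hzS) z' (hS₀Λ hz'S) hzz'))
    · rw [hTf, hTt]
      exact Finset.disjoint_of_subset_left (hT1 z hzS).1
        (Finset.disjoint_of_subset_right (hT2 z' hz'S).1
          (hc.disj12 z (hS₀Λ hzS) z' (hS₀Λ hz'S)))
    · rw [hTt, hTf]
      exact Finset.disjoint_of_subset_left (hT2 z hzS).1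
        (Finset.disjoint_of_subset_right (hT1 z' hz'S).1
          (hc.disj12 z' (hS₀Λ hz'S) z (hS₀Λ hzS)).symm)
    · have hzz' : z ≠ z' := fun h => hne (by rw [h])
      rw [hTt, hTt]
      exact Finset.disjoint_of_subset_left (hT2 z hzS).1
        (Finset.disjoint_of_subset_right (hT2 z' hz'S).1
          (hc.disj22 z (hS₀Λ hzS) z' (hS₀Λ hz'S) hzz'))
  have hmemE : ∀ q : (V × Bool) × (V × Bool), q ∈ P →
      q.1.1 ∈ S₀ ∧ q.2.1 ∈ S₀ ∧ q.1 ≠ q.2 := by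
    intro q hq
    have hq' := Finset.mem_toList.mp hq
    rw [Finset.mem_filter, Finset.mem_product] at hq'
    obtain ⟨⟨hq1, hq2⟩, hne⟩ := hq'
    rw [hE, Finset.mem_product] at hq1 hq2
    exact ⟨hq1.1, hq2.1, hne⟩
  obtain ⟨T'', hsub'', hmin'', hanti''⟩ := cleanPairs G hs hss g P T (by
    intro q hq
    obtain ⟨hq1, hq2, hne⟩ := hmemE q hq
    have hc1 := hTfacts q.1 hq1
    have hc2 := hTfacts q.2 hq2
    have hmle : mIt s g P.length ≤ M := by rw [hM]; exact mIt_mono s g hs hPlen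
    refine ⟨hc1.2, hc2.2, ?_, hne, le_trans hmle hc1.1, le_trans hmle hc2.1⟩
    have := hdisjT q.1.1 hq1 q.2.1 hq2 q.1.2 q.2.2
    simpa using this hne)
  -- Step 4: shrink to exactly g
  have hgle : ∀ i : V × Bool, i.1 ∈ S₀ → g ≤ (T'' i).card := by
    intro i hi
    have h1 : min g (T i).card ≤ (T'' i).card := hmin'' i
    have h2 : M ≤ (T i).card := (hTfacts i hi).1
    have h3 : g ≤ M := g_le_mIt s g K hs
    rw [min_eq_left (le_trans h3 h2)] at h1
    exact h1
  have hch3 : ∀ z : V, ∃ U : Finset V, z ∈ S₀ → U ⊆ T'' (z, false) ∧ U.card = g := by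
    intro z
    by_cases hzS : z ∈ S₀
    · obtain ⟨U, hU1, hU2⟩ := Finset.exists_subset_card_eq (hgle (z, false) hzS)
      exact ⟨U, fun _ => ⟨hU1, hU2⟩⟩
    · exact ⟨∅, fun h => absurd h hzS⟩
  have hch4 : ∀ z : V, ∃ U : Finset V, z ∈ S₀ → U ⊆ T'' (z, true) ∧ U.card = g := by
    intro z
    by_cases hzS : z ∈ S₀
    · obtain ⟨U, hU1, hU2⟩ := Finset.exists_subset_card_eq (hgle (z, true) hzS)
      exact ⟨U, fun _ => ⟨hU1, hU2⟩⟩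
    · exact ⟨∅, fun h => absurd h hzS⟩
  choose U1 hU1 using hch3
  choose U2 hU2 using hch4
  have hU1T : ∀ z ∈ S₀, U1 z ⊆ T1 z := by
    intro z hzS
    refine ((hU1 z hzS).1.trans (hsub'' (z, false))).trans ?_
    rw [hTf]
  have hU2T : ∀ z ∈ S₀, U2 z ⊆ T2 z := by
    intro z hzS
    refine ((hU2 z hzS).1.trans (hsub'' (z, true))).trans ?_
    rw [hTt]
  have hU1Λ : ∀ z ∈ S₀, U1 z ⊆ Λ1 z := fun z hzS => (hU1T z hzS).trans (hT1 z hzS).1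
  have hU2Λ : ∀ z ∈ S₀, U2 z ⊆ Λ2 z := fun z hzS => (hU2T z hzS).trans (hT2 z hzS).1
  have hmemP : ∀ (z : V), z ∈ S₀ → ∀ (z' : V), z' ∈ S₀ → ∀ b b' : Bool,
      ((z, b) : V × Bool) ≠ (z', b') → (((z, b), (z', b')) : (V × Bool) × (V × Bool)) ∈ P := by
    intro z hzS z' hz'S b b' hne
    rw [hP, Finset.mem_toList, Finset.mem_filter, Finset.mem_product]
    refine ⟨⟨?_, ?_⟩, hne⟩
    · rw [hE, Finset.mem_product]; exact ⟨hzS, Finset.mem_univ _⟩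
    · rw [hE, Finset.mem_product]; exact ⟨hz'S, Finset.mem_univ _⟩
  refine ⟨S₀, U1, U2, ?_, ?_, ?_, ?_, ?_⟩
  · -- IsCrystalIn
    refine ⟨hz, hS₀card, fun h => hc.z1_not_mem (hS₀Λ h), fun h => hc.z2_not_mem (hS₀Λ h),
      fun z hzS => (hU1 z hzS).2, fun z hzS => (hU2 z hzS).2, ?_, ?_, ?_, ?_, ?_, ?_, ?_⟩
    · intro z hzS x hx
      obtain ⟨hnΛ, h1, h2⟩ := hc.avoid1 z (hS₀Λ hzS) x (hU1Λ z hzS hx)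
      exact ⟨fun h => hnΛ (hS₀Λ h), h1, h2⟩
    · intro z hzS x hx
      obtain ⟨hnΛ, h1, h2⟩ := hc.avoid2 z (hS₀Λ hzS) x (hU2Λ z hzS hx)
      exact ⟨fun h => hnΛ (hS₀Λ h), h1, h2⟩
    · intro z hzS z' hz'S hne
      exact Finset.disjoint_of_subset_left (hU1Λ z hzS)
        (Finset.disjoint_of_subset_right (hU1Λ z' hz'S)
          (hc.disj11 z (hS₀Λ hzS) z' (hS₀Λ hz'S) hne))
    · intro z hzS z' hz'S hne
      exact Finset.disjoint_of_subset_left (hU2Λ z hzS)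
        (Finset.disjoint_of_subset_right (hU2Λ z' hz'S)
          (hc.disj22 z (hS₀Λ hzS) z' (hS₀Λ hz'S) hne))
    · intro z hzS z' hz'S
      exact Finset.disjoint_of_subset_left (hU1Λ z hzS)
        (Finset.disjoint_of_subset_right (hU2Λ z' hz'S)
          (hc.disj12 z (hS₀Λ hzS) z' (hS₀Λ hz'S)))
    · intro z hzS x hx
      exact hc.adj1 z (hS₀Λ hzS) x (hU1Λ z hzS hx)
    · intro z hzS x hx
      exact hc.adj2 z (hS₀Λ hzS) x (hU2Λ z hzS hx)
  · exact hS₀stable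
  · intro z hzS
    constructor
    · intro u hu v hv
      exact (hT1 z hzS).2.2 u (hU1T z hzS hu) v (hU1T z hzS hv)
    · intro u hu v hv
      exact (hT2 z hzS).2.2 u (hU2T z hzS hu) v (hU2T z hzS hv)
  · intro z hzS z' hz'S hne
    constructor
    · intro u hu v hv
      have hne' : ((z, false) : V × Bool) ≠ (z', false) := by
        intro h; exact hne (congrArg Prod.fst h)
      exact hanti'' _ (hmemP z hzS z' hz'S false false hne') u
        ((hU1 z hzS).1 hu) v ((hU1 z' hz'S).1 hv)
    · intro u hu v hv
      have hne' : ((z, true) : V × Bool) ≠ (z', true) := by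
        intro h; exact hne (congrArg Prod.fst h)
      exact hanti'' _ (hmemP z hzS z' hz'S true true hne') u
        ((hU2 z hzS).1 hu) v ((hU2 z' hz'S).1 hv)
  · intro z hzS z' hz'S
    intro u hu v hv
    have hne' : ((z, false) : V × Bool) ≠ (z', true) := by
      intro h
      have := congrArg Prod.snd h
      simp at this
    exact hanti'' _ (hmemP z hzS z' hz'S false true hne') u
      ((hU1 z hzS).1 hu) v ((hU2 z' hz'S).1 hv)
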